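/- Let p be an odd prime, k ≥ 0, n = p^k, and q an integer coprime to n. Then the sign of the permutation of Z/nZ given by multiplication by q equals the Jacobi symbol (q/n). -/

import Mathlib

open Equiv Equiv.Perm Subgroup

private lemma zolo_legendre_congr (p : ℕ) [Fact p.Prime] {a b : ℤ}
    (h : ((a : ZMod p)) = (b : ZMod p)) : legendreSym p a = legendreSym p b := by
  unfold legendreSym
  rw [h]

private lemma zolo_sign_mulLeft_gen {K : Type*} [Group K] [Fintype K] [DecidableEq K]
    (g : K) (hg : ∀ x : K, x ∈ Subgroup.zpowers g) :
    Equiv.Perm.sign (Equiv.mulLeft g) = (-1) ^ (Fintype.card K - 1) := by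
  rcases eq_or_ne g 1 with rfl | hg1
  · have hsub : ∀ x : K, x = 1 := by
      intro x
      obtain ⟨n, hn⟩ := hg x
      simpa using hn.symm
    have hcard : Fintype.card K = 1 :=
      Fintype.card_eq_one_iff.2 ⟨1, fun x => hsub x⟩
    simp [hcard]
  · have hcyc : (Equiv.mulLeft g).IsCycle := by
      refine ⟨1, by simpa using hg1, fun y hy => ?_⟩
      obtain ⟨n, hn⟩ := hg y
      exact ⟨n, by simp [Equiv.zpow_mulLeft, hn]⟩
    have hsupp : (Equiv.mulLeft g).support = Finset.univ := by
      ext x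
      simp [Equiv.Perm.mem_support, hg1]
    have := hcyc.sign
    rw [hsupp] at this
    rw [this, Finset.card_univ]
    have hcpos : 1 ≤ Fintype.card K := Fintype.card_pos
    obtain ⟨m, hm⟩ := Nat.exists_eq_add_of_le hcpos
    rw [hm]
    simp [pow_succ, pow_add]

private lemma zolo_sign_mulLeft {G : Type*} [CommGroup G] [Fintype G] [DecidableEq G]
    (u : G) (π : Equiv.Perm G) (hπ : ∀ x, π x = u * x) :
    Equiv.Perm.sign π =
      (-1) ^ ((orderOf u - 1) * (Fintype.card G / orderOf u)) := by
  classical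
  set H := Subgroup.zpowers u with hH
  -- the equivalence (G ⧸ H) × H ≃ G
  let E : (G ⧸ H) × H ≃ G :=
    { toFun := fun ch => ch.1.out * ch.2
      invFun := fun x => (QuotientGroup.mk x,
        ⟨(QuotientGroup.mk (s := H) x).out⁻¹ * x,
          QuotientGroup.leftRel_apply.mp (Quotient.exact' (Quotient.out_eq' _))⟩)
      left_inv := by
        rintro ⟨c, h⟩
        have hmk : QuotientGroup.mk (s := H) (c.out * ↑h) = c := by
          rw [QuotientGroup.mk_mul_of_mem _ h.2, QuotientGroup.out_eq']
        refine Prod.ext (by simpa using hmk) (Subtype.ext ?_)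
        simp only [hmk]
        group
      right_inv := by
        intro x
        simp }
  let uH : H := ⟨u, Subgroup.mem_zpowers u⟩
  let τ : Equiv.Perm ((G ⧸ H) × H) := Equiv.prodCongrRight (fun _ => Equiv.mulLeft uH)
  have hπE : π = E.permCongr τ := by
    ext x
    have : π (E (E.symm x)) = E (τ (E.symm x)) := by
      obtain ⟨c, h⟩ := E.symm x
      show π (c.out * ↑h) = E (c, uH * h)
      rw [hπ]
      show u * (c.out * ↑h) = c.out * (u * ↑h)
      rw [← mul_assoc, mul_comm u, mul_assoc]
    simpa using this
  have hsign : Equiv.Perm.sign π = Equiv.Perm.sign τ := by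
    rw [hπE, Equiv.Perm.sign_permCongr]
  rw [hsign]
  rw [show τ = Equiv.prodCongrRight (fun _ => Equiv.mulLeft uH) from rfl,
    Equiv.Perm.sign_prodCongrRight]
  have hgen : ∀ x : H, x ∈ Subgroup.zpowers uH := by
    rintro ⟨x, hx⟩
    obtain ⟨n, hn⟩ := hx
    exact ⟨n, Subtype.ext (by simpa using hn)⟩
  have hcardH : Fintype.card H = orderOf u := Fintype.card_zpowers
  have hquot : Fintype.card (G ⧸ H) = Fintype.card G / orderOf u := by
    have h1 := Subgroup.card_eq_card_quotient_mul_card_subgroup H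
    have hcardH' : Nat.card H = orderOf u := by
      rw [← Fintype.card_eq_nat_card, hcardH]
    have hpos : 0 < orderOf u := orderOf_pos u
    rw [Fintype.card_eq_nat_card, Fintype.card_eq_nat_card, h1, hcardH',
      Nat.mul_div_cancel _ hpos]
  rw [Finset.prod_const, zolo_sign_mulLeft_gen uH hgen, hcardH, Finset.card_univ, hquot,
    ← pow_mul]

private lemma zolo_parity (p k : ℕ) [hp : Fact p.Prime] (hodd : Odd p)
    [NeZero (p ^ (k + 1))] (u : (ZMod (p ^ (k + 1)))ˣ) :
    ((-1 : ℤ) ^ ((orderOf u - 1) * (Fintype.card (ZMod (p ^ (k + 1)))ˣ / orderOf u)))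
      = legendreSym p ((u : ZMod (p ^ (k + 1))).val) := by
  classical
  set d := orderOf u with hd
  set m := Fintype.card (ZMod (p ^ (k + 1)))ˣ with hm
  have hpdvd : p ∣ p ^ (k + 1) := dvd_pow_self p (Nat.succ_ne_zero k)
  set φ := ZMod.unitsMap hpdvd with hφ
  set v := φ u with hv
  set d' := orderOf v with hd'
  have hp2 : 2 < p := lt_of_le_of_ne hp.out.two_le (fun h => by
    rcases hodd with ⟨t, ht⟩; omega)
  have hpm1even : 2 ∣ p - 1 := by rcases hodd with ⟨t, ht⟩; omega
  have hd'd : d' ∣ d := orderOf_map_dvd φ u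
  have hd'p : d' ∣ p - 1 := by
    have := orderOf_dvd_card (x := v)
    rwa [ZMod.card_units] at this
  have hdm : d ∣ m := orderOf_dvd_card
  have hmcard : m = p ^ k * (p - 1) := by
    rw [hm, ZMod.card_units_eq_totient, Nat.totient_prime_pow hp.out (Nat.succ_pos k)]
    simp
  -- e = d / d' divides p ^ k
  have hkercard : Nat.card φ.ker = p ^ k := by
    have hsurj : Function.Surjective φ := ZMod.unitsMap_surjective hpdvd
    have h1 : Nat.card (ZMod (p ^ (k + 1)))ˣ = Nat.card ((ZMod (p ^ (k + 1)))ˣ ⧸ φ.ker) * Nat.card φ.ker :=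
      Subgroup.card_eq_card_quotient_mul_card_subgroup φ.ker
    have h2 : Nat.card ((ZMod (p ^ (k + 1)))ˣ ⧸ φ.ker) = Nat.card (ZMod p)ˣ :=
      Nat.card_congr (QuotientGroup.quotientKerEquivOfSurjective φ hsurj).toEquiv
    have h3 : Nat.card (ZMod p)ˣ = p - 1 := by
      rw [← Fintype.card_eq_nat_card, ZMod.card_units]
    rw [h2, h3, ← Fintype.card_eq_nat_card, ← hm, hmcard, mul_comm (p ^ k)] at h1
    have hpos : 0 < p - 1 := by omega
    exact (Nat.eq_of_mul_eq_mul_left hpos h1).symm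
  have he : d / d' ∣ p ^ k := by
    have hker : u ^ d' ∈ φ.ker := by
      rw [MonoidHom.mem_ker, map_pow]
      exact pow_orderOf_eq_one v
    have h1 : orderOf (⟨u ^ d', hker⟩ : φ.ker) ∣ Nat.card φ.ker :=
      orderOf_dvd_natCard _
    rw [Subgroup.orderOf_mk, orderOf_pow, ← hd, Nat.gcd_eq_right hd'd, hkercard] at h1
    exact h1
  have hdeq : d' * (d / d') = d := Nat.mul_div_cancel' hd'd
  have hd1 : 0 < d := orderOf_pos u
  -- Euler criterion translation
  have hcoe : (((u : ZMod (p ^ (k + 1))).val : ℤ) : ZMod p) = (v : ZMod p) := by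
    push_cast
    rw [ZMod.natCast_val, hv, hφ, ZMod.unitsMap_def, Units.coe_map, MonoidHom.coe_coe,
      ZMod.castHom_apply]
  have hne : ((v : ZMod p)) ≠ 0 := v.ne_zero
  have hhalf : p / 2 = (p - 1) / 2 := by omega
  have heuler : IsSquare ((((u : ZMod (p ^ (k + 1))).val : ℤ)) : ZMod p) ↔ d' ∣ (p - 1) / 2 := by
    have h5 : ((v : ZMod p)) ^ (p / 2) = 1 ↔ v ^ (p / 2) = 1 := by
      rw [Units.ext_iff, Units.val_pow_eq_pow_val, Units.val_one]
    rw [hcoe, ZMod.euler_criterion p hne, h5, ← orderOf_dvd_iff_pow_eq_one, hhalf]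
  by_cases hdd : d' ∣ (p - 1) / 2
  · have hleg : legendreSym p ((u : ZMod (p ^ (k + 1))).val : ℤ) = 1 := by
      rw [legendreSym.eq_one_iff p (by rw [hcoe]; exact hne)]
      exact heuler.mpr hdd
    have h2d' : 2 * d' ∣ p - 1 := (Nat.dvd_div_iff_mul_dvd hpm1even).mp hdd
    have h2d : 2 ∣ m / d := by
      rw [Nat.dvd_div_iff_mul_dvd hdm]
      have hdvd : (2 * d') * (d / d') ∣ (p - 1) * p ^ k := Nat.mul_dvd_mul h2d' he
      have heq1 : d * 2 = 2 * d' * (d / d') := by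
        conv_lhs => rw [← hdeq]
        ring
      have heq2 : m = (p - 1) * p ^ k := by rw [hmcard, mul_comm]
      rw [heq1, heq2]
      exact hdvd
    have heven : Even ((d - 1) * (m / d)) := by
      rcases h2d with ⟨t, ht⟩
      exact ⟨(d - 1) * t, by rw [ht]; ring⟩
    rw [hleg]
    exact Even.neg_one_pow heven
  · have hleg : legendreSym p ((u : ZMod (p ^ (k + 1))).val : ℤ) = -1 := by
      rw [legendreSym.eq_neg_one_iff p]
      exact fun hsq => hdd (heuler.mp hsq)
    have hp2' : ¬ (2 ∣ p) := by rcases hodd with ⟨t, ht⟩; omega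
    have hd'even : 2 ∣ d' := by
      by_contra h2
      have hcop : Nat.Coprime d' 2 :=
        ((Nat.Prime.coprime_iff_not_dvd Nat.prime_two).mpr h2).symm
      have hdvd : d' ∣ 2 * ((p - 1) / 2) := by
        rw [Nat.mul_div_cancel' hpm1even]
        exact hd'p
      exact hdd (hcop.dvd_of_dvd_mul_left hdvd)
    have hdeven : 2 ∣ d := hd'even.trans hd'd
    have hpd' : ¬ p ∣ d' := by
      intro hpd
      have h1 : p ∣ p - 1 := hpd.trans hd'p
      have h2 : p ≤ p - 1 := Nat.le_of_dvd (by omega) h1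
      omega
    have hcopp : Nat.Coprime (2 * d') (p ^ k) := by
      refine Nat.Coprime.mul ?_ ?_
      · exact (((Nat.Prime.coprime_iff_not_dvd Nat.prime_two).mpr hp2')).pow_right k
      · exact ((hp.out.coprime_iff_not_dvd.mpr hpd').symm).pow_right k
    have hmd : ¬ 2 ∣ m / d := by
      intro h2
      have hdvd2 : d * 2 ∣ m := (Nat.dvd_div_iff_mul_dvd hdm).mp h2
      have h2d'm : 2 * d' ∣ p ^ k * (p - 1) := by
        refine dvd_trans ?_ (hmcard ▸ hdvd2)
        refine ⟨d / d', ?_⟩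
        conv_lhs => rw [← hdeq]
        ring
      have h2d' : 2 * d' ∣ p - 1 := hcopp.dvd_of_dvd_mul_left h2d'm
      exact hdd ((Nat.dvd_div_iff_mul_dvd hpm1even).mpr h2d')
    have hoddexp : Odd ((d - 1) * (m / d)) := by
      refine Nat.odd_mul.mpr ⟨?_, ?_⟩
      · exact Nat.odd_iff.mpr (by omega)
      · exact Nat.odd_iff.mpr (by omega)
    rw [hleg]
    exact Odd.neg_one_pow hoddexp

private lemma zolo_main (p : ℕ) [hpf : Fact p.Prime] (hodd : Odd p) :
    ∀ (k : ℕ) [NeZero (p ^ k)] (u : (ZMod (p ^ k))ˣ) (π : Equiv.Perm (ZMod (p ^ k))),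
      (∀ x, π x = (u : ZMod (p ^ k)) * x) →
      ((Equiv.Perm.sign π : ℤˣ) : ℤ) = legendreSym p ((u : ZMod (p ^ k)).val) ^ k := by
  have hp : p.Prime := hpf.out
  intro k
  induction k with
  | zero =>
    intro _ u π hπ
    haveI : Subsingleton (ZMod (p ^ 0)) := by rw [pow_zero]; infer_instance
    have hπ1 : π = 1 := Equiv.ext fun x => Subsingleton.elim _ _
    rw [hπ1, map_one]
    simp
  | succ k ih =>
    intro _ u π hπ
    haveI hnz1 : NeZero (p ^ (k + 1)) := ⟨pow_ne_zero _ hp.pos.ne'⟩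
    haveI hnz0 : NeZero (p ^ k) := ⟨pow_ne_zero _ hp.pos.ne'⟩
    classical
    -- the multiplication permutation preserves units
    have hpres : ∀ x : ZMod (p ^ (k + 1)), IsUnit (π x) ↔ IsUnit x := by
      intro x
      rw [hπ x]
      exact (Units.isUnit_units_mul u x)
    have hpres' : ∀ x : ZMod (p ^ (k + 1)), ¬ IsUnit (π x) ↔ ¬ IsUnit x :=
      fun x => not_congr (hpres x)
    have hsplit : π = Equiv.Perm.subtypeCongr (π.subtypePerm hpres) (π.subtypePerm hpres') := by
      ext x
      by_cases hx : IsUnit x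
      · rw [Equiv.Perm.subtypeCongr.left_apply _ _ hx]
        rfl
      · rw [Equiv.Perm.subtypeCongr.right_apply _ _ hx]
        rfl
    -- the unit part
    let e1 : {x : ZMod (p ^ (k + 1)) // IsUnit x} ≃ (ZMod (p ^ (k + 1)))ˣ :=
      { toFun := fun x => x.2.unit
        invFun := fun v => ⟨v, v.isUnit⟩
        left_inv := fun x => Subtype.ext (IsUnit.unit_spec x.2)
        right_inv := fun v => Units.ext (IsUnit.unit_spec _) }
    have hperm1 : ∀ w : (ZMod (p ^ (k + 1)))ˣ,
        (e1.permCongr (π.subtypePerm hpres)) w = u * w := by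
      intro w
      apply Units.ext
      show (((π.subtypePerm hpres) (e1.symm w)).2.unit : ZMod (p ^ (k + 1))) = ((u * w : (ZMod (p ^ (k + 1)))ˣ) : ZMod (p ^ (k + 1)))
      rw [IsUnit.unit_spec]
      show π ((w : (ZMod (p ^ (k + 1)))ˣ) : ZMod (p ^ (k + 1))) = _
      rw [hπ]
      simp
    have hsignep : ((Equiv.Perm.sign (π.subtypePerm hpres) : ℤˣ) : ℤ)
        = legendreSym p ((u : ZMod (p ^ (k + 1))).val) := by
      rw [← Equiv.Perm.sign_permCongr e1]
      rw [zolo_sign_mulLeft u _ hperm1]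
      push_cast
      exact zolo_parity p k hodd u
    -- the non-unit part
    have hpk_dvd : p ^ k ∣ p ^ (k + 1) := pow_dvd_pow p (Nat.le_succ k)
    have haux : ∀ x y : ℕ, x ≡ y [MOD p ^ k] →
        ((p * x : ℕ) : ZMod (p ^ (k + 1))) = ((p * y : ℕ) : ZMod (p ^ (k + 1))) := by
      intro x y hxy
      rw [ZMod.natCast_eq_natCast_iff]
      have h1 : p * x ≡ p * y [MOD p * p ^ k] := Nat.ModEq.mul_left' p hxy
      rwa [show p * p ^ k = p ^ (k + 1) by ring] at h1
    have hpnu : ¬ IsUnit ((p : ℕ) : ZMod (p ^ (k + 1))) := by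
      intro h
      have hcop := (ZMod.isUnit_iff_coprime p (p ^ (k + 1))).mp h
      have := Nat.Coprime.eq_one_of_dvd hcop (dvd_pow_self p (Nat.succ_ne_zero k))
      exact hp.one_lt.ne' this
    set f : ZMod (p ^ k) → {x : ZMod (p ^ (k + 1)) // ¬ IsUnit x} :=
      fun a => ⟨((p * a.val : ℕ) : ZMod (p ^ (k + 1))), by
        intro h
        push_cast at h
        exact hpnu (isUnit_of_mul_isUnit_left h)⟩ with hf
    have hfinj : Function.Injective f := by
      intro a b hab
      have h1 : ((p * a.val : ℕ) : ZMod (p ^ (k + 1))) = ((p * b.val : ℕ) : ZMod (p ^ (k + 1))) :=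
        congrArg Subtype.val hab
      rw [ZMod.natCast_eq_natCast_iff] at h1
      rw [show p ^ (k + 1) = p * p ^ k by ring] at h1
      have h2 : a.val ≡ b.val [MOD p ^ k] := Nat.ModEq.mul_left_cancel' hp.pos.ne' h1
      have h3 : a.val = b.val := by
        have := h2
        unfold Nat.ModEq at this
        rwa [Nat.mod_eq_of_lt (ZMod.val_lt a), Nat.mod_eq_of_lt (ZMod.val_lt b)] at this
      exact ZMod.val_injective _ h3
    have hfsurj : Function.Surjective f := by
      rintro ⟨x, hx⟩
      have hxval : p ∣ x.val := by
        by_contra hnd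
        apply hx
        have hcop : Nat.Coprime x.val (p ^ (k + 1)) :=
          Nat.Coprime.pow_right _ ((hp.coprime_iff_not_dvd.mpr hnd).symm)
        have := (ZMod.isUnit_iff_coprime x.val (p ^ (k + 1))).mpr hcop
        rwa [ZMod.natCast_val, ZMod.cast_id] at this
      obtain ⟨c, hc⟩ := hxval
      have hclt : c < p ^ k := by
        have hxlt : x.val < p ^ (k + 1) := ZMod.val_lt x
        rw [hc, show p ^ (k + 1) = p * p ^ k by ring] at hxlt
        exact lt_of_mul_lt_mul_left hxlt (Nat.zero_le p)
      refine ⟨(c : ZMod (p ^ k)), Subtype.ext ?_⟩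
      show ((p * ((c : ZMod (p ^ k))).val : ℕ) : ZMod (p ^ (k + 1))) = x
      rw [ZMod.val_natCast, Nat.mod_eq_of_lt hclt, ← hc, ZMod.natCast_val, ZMod.cast_id]
    let e2 : ZMod (p ^ k) ≃ {x : ZMod (p ^ (k + 1)) // ¬ IsUnit x} :=
      Equiv.ofBijective f ⟨hfinj, hfsurj⟩
    -- reduced unit
    set u' : (ZMod (p ^ k))ˣ := ZMod.unitsMap hpk_dvd u with hu'
    have hu'coe : ((u' : ZMod (p ^ k))) = (((u : ZMod (p ^ (k + 1))).val : ℕ) : ZMod (p ^ k)) := by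
      rw [hu', ZMod.unitsMap_def]
      show (ZMod.castHom hpk_dvd (ZMod (p ^ k))) ((u : ZMod (p ^ (k + 1)))) = _
      rw [ZMod.castHom_apply, ← ZMod.natCast_val]
    have hu'val : (u' : ZMod (p ^ k)).val = (u : ZMod (p ^ (k + 1))).val % p ^ k := by
      rw [hu'coe, ZMod.val_natCast]
    -- equivariance of f
    have hcomm : ∀ a : ZMod (p ^ k), π (f a).val = (f ((u' : ZMod (p ^ k)) * a)).val := by
      intro a
      show π _ = ((p * ((u' : ZMod (p ^ k)) * a).val : ℕ) : ZMod (p ^ (k + 1)))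
      have hmod : ((u' : ZMod (p ^ k)) * a).val ≡ (u : ZMod (p ^ (k + 1))).val * a.val [MOD p ^ k] := by
        rw [ZMod.val_mul, hu'val]
        calc (u : ZMod (p ^ (k + 1))).val % p ^ k * a.val % p ^ k
            ≡ (u : ZMod (p ^ (k + 1))).val % p ^ k * a.val [MOD p ^ k] := Nat.mod_modEq _ _
          _ ≡ (u : ZMod (p ^ (k + 1))).val * a.val [MOD p ^ k] :=
              Nat.ModEq.mul_right a.val (Nat.mod_modEq _ _)
      rw [haux _ _ hmod, hπ]
      have hval : (((u : ZMod (p ^ (k + 1))).val : ℕ) : ZMod (p ^ (k + 1)))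
          = (u : ZMod (p ^ (k + 1))) := ZMod.natCast_rightInverse _
      show (u : ZMod (p ^ (k + 1))) * ((p * a.val : ℕ) : ZMod (p ^ (k + 1)))
          = ((p * ((u : ZMod (p ^ (k + 1))).val * a.val) : ℕ) : ZMod (p ^ (k + 1)))
      rw [Nat.cast_mul, Nat.cast_mul, Nat.cast_mul, hval]
      ring
    -- transport the non-unit permutation
    have hsignen : ((Equiv.Perm.sign (π.subtypePerm (p := fun x => ¬ IsUnit x) hpres') : ℤˣ) : ℤ)
        = legendreSym p ((u : ZMod (p ^ (k + 1))).val) ^ k := by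
      rw [← Equiv.Perm.sign_permCongr e2.symm]
      have hσ2 : ∀ a : ZMod (p ^ k),
          (e2.symm.permCongr (π.subtypePerm hpres')) a = (u' : ZMod (p ^ k)) * a := by
        intro a
        show e2.symm ((π.subtypePerm hpres') (e2 a)) = _
        have : (π.subtypePerm hpres') (e2 a) = e2 ((u' : ZMod (p ^ k)) * a) :=
          Subtype.ext (hcomm a)
        rw [this, Equiv.symm_apply_apply]
      have hih := ih u' (e2.symm.permCongr (π.subtypePerm hpres')) hσ2
      rw [hih]
      -- compare Legendre symbols
      cases k with
      | zero => simp
      | succ j =>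
        congr 1
        apply zolo_legendre_congr
        push_cast
        rw [hu'val]
        conv_rhs => rw [← Nat.div_add_mod ((u : ZMod (p ^ (j + 1 + 1))).val) (p ^ (j + 1))]
        push_cast
        have hz : ((p ^ (j + 1) : ℕ) : ZMod p) = 0 := by
          push_cast
          rw [ZMod.natCast_self]
          simp
        push_cast at hz
        rw [hz]
        ring
    -- combine
    rw [hsplit, Equiv.Perm.sign_subtypeCongr]
    push_cast
    rw [hsignep, hsignen, ← pow_succ']

/-- Let `p` be an odd prime, `k ≥ 0`, `n = p^k`, and `q` an integer coprime to `n`.  Then the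
sign of the permutation of `ℤ/nℤ` given by multiplication by `q` equals the Jacobi symbol
`(q / n)`. -/
theorem sign_mul_perm_eq_jacobiSym_of_odd_prime_pow
    (p k n : ℕ) [NeZero n] (hp : p.Prime) (hodd : Odd p) (hn : n = p ^ k)
    (q : ℤ) (hq : Int.gcd q n = 1)
    (π : Equiv.Perm (ZMod n)) (hπ : ∀ x : ZMod n, π x = (q : ZMod n) * x) :
    (Equiv.Perm.sign π : ℤ) = jacobiSym q n := by
  haveI : Fact p.Prime := ⟨hp⟩
  subst hn
  have hcop : IsCoprime q ((p ^ k : ℕ) : ℤ) := Int.isCoprime_iff_gcd_eq_one.mpr hq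
  obtain ⟨a, b, hab⟩ := hcop
  have hz : (((p ^ k : ℕ) : ℤ) : ZMod (p ^ k)) = 0 := by
    rw [Int.cast_natCast, ZMod.natCast_self]
  have h2 := congrArg (fun t : ℤ => (t : ZMod (p ^ k))) hab
  simp only [Int.cast_add, Int.cast_mul, Int.cast_one, hz, mul_zero, add_zero] at h2
  have hunit : IsUnit ((q : ZMod (p ^ k))) :=
    IsUnit.of_mul_eq_one _ ((mul_comm ((a : ZMod (p ^ k))) _).symm.trans h2)
  have hπ' : ∀ x, π x = (hunit.unit : ZMod (p ^ k)) * x := by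
    intro x
    rw [hπ, IsUnit.unit_spec]
  have h1 := zolo_main p hodd k hunit.unit π hπ'
  rw [h1, jacobiSym.pow_right, ← jacobiSym.legendreSym.to_jacobiSym]
  obtain rfl | hk := Nat.eq_zero_or_pos k
  · simp
  · congr 1
    apply zolo_legendre_congr
    have hpdvd : p ∣ p ^ k := dvd_pow_self p hk.ne'
    rw [Int.cast_natCast, ZMod.natCast_val, ← ZMod.castHom_apply (h := hpdvd), IsUnit.unit_spec,
      map_intCast]
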